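/- Let β, σ, γ, κ > 0, δ > 0 and q ∈ (0,1), and define Ψ = γ(κ+σ), Φ = qγ + (1−q)κ + σ, C = βΦ − Ψ, D = δΦ + Ψ. Then the components of the endemic equilibrium (S^e, A^e, I^e, R^e) = ( Ψ/(βΦ), qδγC/(βΦD), δ((1−q)κ+σ)C/(βΦD), ΨC/(βΦD) ) sum to 1: S^e + A^e + I^e + R^e = 1. Moreover, if C > 0 then each of S^e, A^e, I^e, R^e lies in the open interval (0,1). -/

import Mathlib

/-- The components of the endemic equilibrium of the group SAIR(S) model sum
to `1`; moreover, if `C > 0` then each component lies in the open interval `(0,1)`. -/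
theorem sairs_endemic_equilibrium_in_simplex
    (β σ γ κ δ q : ℝ)
    (hβ : 0 < β) (hσ : 0 < σ) (hγ : 0 < γ) (hκ : 0 < κ) (hδ : 0 < δ)
    (hq : q ∈ Set.Ioo (0 : ℝ) 1)
    (Ψ Φ C D Se Ae Ie Re : ℝ)
    (hΨ : Ψ = γ * (κ + σ)) (hΦ : Φ = q * γ + (1 - q) * κ + σ)
    (hC : C = β * Φ - Ψ) (hD : D = δ * Φ + Ψ)
    (hSe : Se = Ψ / (β * Φ))
    (hAe : Ae = q * δ * γ * C / (β * Φ * D))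
    (hIe : Ie = δ * ((1 - q) * κ + σ) * C / (β * Φ * D))
    (hRe : Re = Ψ * C / (β * Φ * D)) :
    Se + Ae + Ie + Re = 1 ∧
    (0 < C → Se ∈ Set.Ioo (0 : ℝ) 1 ∧ Ae ∈ Set.Ioo (0 : ℝ) 1 ∧
      Ie ∈ Set.Ioo (0 : ℝ) 1 ∧ Re ∈ Set.Ioo (0 : ℝ) 1) := by
  obtain ⟨hq0, hq1⟩ := hq
  have hΦpos : 0 < Φ := by
    rw [hΦ]; have : 0 < (1 - q) * κ := mul_pos (by linarith) hκ
    positivity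
  have hΨpos : 0 < Ψ := by rw [hΨ]; positivity
  have hDpos : 0 < D := by rw [hD]; positivity
  have hβΦ : 0 < β * Φ := mul_pos hβ hΦpos
  have hsum : Se + Ae + Ie + Re = 1 := by
    have h1 : Se = Ψ * D / (β * Φ * D) := by
      rw [hSe]; exact (mul_div_mul_right _ _ hDpos.ne').symm
    rw [h1, hAe, hIe, hRe, ← add_div, ← add_div, ← add_div,
      div_eq_one_iff_eq (by positivity : β * Φ * D ≠ 0)]
    linear_combination (-δ*C)*hΦ + D*hC + (-C)*hD
  refine ⟨hsum, fun hCpos => ?_⟩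
  have hden : 0 < β * Φ * D := mul_pos hβΦ hDpos
  have hS : 0 < Se := by rw [hSe]; positivity
  have hA : 0 < Ae := by rw [hAe]; positivity
  have hI : 0 < Ie := by
    rw [hIe]
    have : 0 < (1 - q) * κ + σ := by nlinarith
    positivity
  have hR : 0 < Re := by rw [hRe]; positivity
  exact ⟨⟨hS, by linarith⟩, ⟨hA, by linarith⟩, ⟨hI, by linarith⟩, ⟨hR, by linarith⟩⟩
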